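/- arXiv:2204.14080 — 2 statements merged into one kernel-verified Lean document; each statement's English description precedes it below -/
import Mathlib

section
/- Let Γ be a right-angled Artin graph (all edge labels equal 2). Then the intersection of any two parabolic subgroups of the right-angled Artin group G_Γ is a parabolic subgroup. -/
/-- An Artin graph: a simplicial graph with even/arbitrary labels; `m u v = 0`
means `u` and `v` are not joined by an edge, otherwise `m u v ≥ 2` is the label. -/
structure ArtinGraph (V : Type) where
  m : V → V → ℕ
  symm : ∀ u v, m u v = m v u
  loopless : ∀ v, m v v = 0
  ne_one : ∀ u v, m u v ≠ 1

namespace ArtinGraph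

variable {V : Type}

/-- `word u v n` is the prefix of length `n` of the alternating word `uvuv…`. -/
def word : V → V → ℕ → FreeGroup V
  | _, _, 0 => 1
  | u, v, n + 1 => FreeGroup.of u * word v u n

/-- The Artin relations of the graph. -/
def rels (Γ : ArtinGraph V) : Set (FreeGroup V) :=
  {r | ∃ u v, Γ.m u v ≠ 0 ∧ r = word u v (Γ.m u v) * (word v u (Γ.m u v))⁻¹}

/-- The Artin group of an Artin graph. -/
def ArtinGroup (Γ : ArtinGraph V) : Type := PresentedGroup Γ.rels

instance (Γ : ArtinGraph V) : Group Γ.ArtinGroup :=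
  inferInstanceAs (Group (PresentedGroup Γ.rels))

/-- The generator of the Artin group corresponding to a vertex. -/
def gen (Γ : ArtinGraph V) (v : V) : Γ.ArtinGroup := PresentedGroup.of v

/-- The standard parabolic subgroup on a set `S` of vertices. -/
def std (Γ : ArtinGraph V) (S : Set V) : Subgroup Γ.ArtinGroup :=
  Subgroup.closure (Γ.gen '' S)

/-- The conjugate `g H g⁻¹` of a subgroup. -/
def conjP {G : Type*} [Group G] (g : G) (H : Subgroup G) : Subgroup G :=
  H.map (MulAut.conj g).toMonoidHom

/-- A parabolic subgroup is a conjugate of a standard parabolic subgroup. -/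
def IsParabolic (Γ : ArtinGraph V) (P : Subgroup Γ.ArtinGroup) : Prop :=
  ∃ (S : Set V) (g : Γ.ArtinGroup), P = conjP g (Γ.std S)

/-- An Artin graph is even if all labels are even. -/
def IsEven (Γ : ArtinGraph V) : Prop := ∀ u v, Even (Γ.m u v)

/-- The FC condition for even Artin graphs: in every triangle at least two of
the three labels are equal to `2`. -/
def IsFC (Γ : ArtinGraph V) : Prop :=
  ∀ u v w, Γ.m u v ≠ 0 → Γ.m v w ≠ 0 → Γ.m w u ≠ 0 →
    (Γ.m u v = 2 ∧ Γ.m v w = 2) ∨ (Γ.m v w = 2 ∧ Γ.m w u = 2) ∨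
      (Γ.m u v = 2 ∧ Γ.m w u = 2)

/-- The link of a vertex. -/
def lk (Γ : ArtinGraph V) (x : V) : Set V := {u | Γ.m x u ≠ 0}

/-- The star of a vertex. -/
def star (Γ : ArtinGraph V) (x : V) : Set V := insert x (Γ.lk x)

end ArtinGraph

-- Part 1: letters, words, swaps, eval
namespace Raag
open ArtinGraph

variable {V : Type}

/-- inverse of a letter -/
def linv (a : V × Bool) : V × Bool := (a.1, !a.2)

@[simp] lemma linv_linv (a : V × Bool) : linv (linv a) = a := by
  simp [linv]

@[simp] lemma linv_fst (a : V × Bool) : (linv a).1 = a.1 := rfl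

variable (Γ : ArtinGraph V)

/-- one swap of two adjacent commuting letters -/
inductive Step : List (V × Bool) → List (V × Bool) → Prop
  | swap (a b : V × Bool) (h : Γ.m a.1 b.1 ≠ 0) (y : List (V × Bool)) :
      Step (a :: b :: y) (b :: a :: y)
  | cons (c : V × Bool) {w w' : List (V × Bool)} : Step w w' → Step (c :: w) (c :: w')

/-- swap equivalence -/
def SE : List (V × Bool) → List (V × Bool) → Prop := Relation.ReflTransGen (Step Γ)

variable {Γ}

lemma Step.symm {w w' : List (V × Bool)} (h : Step Γ w w') : Step Γ w' w := by
  induction h with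
  | swap a b h y => exact Step.swap b a (by rwa [Γ.symm]) y
  | cons c _ ih => exact Step.cons c ih

@[refl] lemma SE.refl (w : List (V × Bool)) : SE Γ w w := Relation.ReflTransGen.refl

lemma SE.trans {w₁ w₂ w₃ : List (V × Bool)} (h : SE Γ w₁ w₂) (h' : SE Γ w₂ w₃) :
    SE Γ w₁ w₃ := Relation.ReflTransGen.trans h h'

lemma SE.single {w w' : List (V × Bool)} (h : Step Γ w w') : SE Γ w w' :=
  Relation.ReflTransGen.single h

lemma SE.symm {w w' : List (V × Bool)} (h : SE Γ w w') : SE Γ w' w := by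
  induction h with
  | refl => rfl
  | tail _ h ih => exact SE.trans (SE.single h.symm) ih

lemma SE.cons_congr {w w' : List (V × Bool)} (c : V × Bool) (h : SE Γ w w') :
    SE Γ (c :: w) (c :: w') := by
  induction h with
  | refl => rfl
  | tail _ h ih => exact ih.trans (SE.single (Step.cons c h))

lemma SE.append_left {w w' : List (V × Bool)} (x : List (V × Bool)) (h : SE Γ w w') :
    SE Γ (x ++ w) (x ++ w') := by
  induction x with
  | nil => exact h
  | cons c x ih => exact ih.cons_congr c

lemma Step.append_right {w w' : List (V × Bool)} (h : Step Γ w w') (y : List (V × Bool)) :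
    Step Γ (w ++ y) (w' ++ y) := by
  induction h with
  | swap a b h z => exact Step.swap a b h (z ++ y)
  | cons c _ ih => exact Step.cons c ih

lemma SE.append_right {w w' : List (V × Bool)} (h : SE Γ w w') (y : List (V × Bool)) :
    SE Γ (w ++ y) (w' ++ y) := by
  induction h with
  | refl => rfl
  | tail _ h ih => exact ih.trans (SE.single (h.append_right y))

lemma SE.append_congr {x x' w w' : List (V × Bool)} (h : SE Γ x x') (h' : SE Γ w w') :
    SE Γ (x ++ w) (x' ++ w') := (h.append_right w).trans (SE.append_left x' h')

lemma Step.perm {w w' : List (V × Bool)} (h : Step Γ w w') : w.Perm w' := by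
  induction h with
  | swap a b _ y => exact List.Perm.swap b a y
  | cons c _ ih => exact ih.cons c

lemma SE.perm {w w' : List (V × Bool)} (h : SE Γ w w') : w.Perm w' := by
  induction h with
  | refl => exact List.Perm.refl _
  | tail _ h ih => exact ih.trans h.perm

lemma SE.length_eq {w w' : List (V × Bool)} (h : SE Γ w w') : w.length = w'.length :=
  h.perm.length_eq

lemma SE.mem_iff {w w' : List (V × Bool)} (h : SE Γ w w') {c : V × Bool} :
    c ∈ w ↔ c ∈ w' := h.perm.mem_iff

/-- move a letter commuting with everything before it to the front -/
lemma se_moveFront {p : List (V × Bool)} (c : V × Bool) (q : List (V × Bool))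
    (hp : ∀ b ∈ p, Γ.m c.1 b.1 ≠ 0) :
    SE Γ (p ++ c :: q) (c :: (p ++ q)) := by
  induction p with
  | nil => rfl
  | cons d p ih =>
      have h1 : SE Γ (p ++ c :: q) (c :: (p ++ q)) := ih (fun b hb => hp b (by simp [hb]))
      have h2 : SE Γ (d :: (p ++ c :: q)) (d :: c :: (p ++ q)) := h1.cons_congr d
      refine h2.trans (SE.single ?_)
      have : Γ.m c.1 d.1 ≠ 0 := hp d (by simp)
      exact Step.swap d c (by rwa [Γ.symm]) _

lemma se_moveBack {q : List (V × Bool)} (c : V × Bool) (p : List (V × Bool))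
    (hq : ∀ b ∈ q, Γ.m c.1 b.1 ≠ 0) :
    SE Γ (p ++ c :: q) (p ++ q ++ [c]) := by
  have : SE Γ (c :: q) (q ++ [c]) := by
    induction q with
    | nil => rfl
    | cons d q ih =>
        have h2 : SE Γ (c :: d :: q) (d :: c :: q) :=
          SE.single (Step.swap c d (hq d (by simp)) q)
        refine h2.trans ?_
        have := (ih (fun b hb => hq b (by simp [hb]))).cons_congr d
        simpa using this
  have := this.append_left (Γ := Γ) p
  simpa using this

lemma step_reverse {w w' : List (V × Bool)} (h : Step Γ w w') :
    SE Γ w.reverse w'.reverse := by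
  induction h with
  | swap a b h y =>
      have : Step Γ (b :: a :: ([] : List (V × Bool))) (a :: b :: []) :=
        Step.swap b a (by rwa [Γ.symm]) []
      have h2 := (SE.single this).append_left (Γ := Γ) y.reverse
      simpa using h2
  | cons c _ ih => simpa using ih.append_right [c]

lemma se_reverse {w w' : List (V × Bool)} (h : SE Γ w w') : SE Γ w.reverse w'.reverse := by
  induction h with
  | refl => rfl
  | tail _ hstep ih => exact ih.trans (step_reverse hstep)

end Raag

-- Part 2: evaluation into the Artin group
namespace Raag
open ArtinGraph

variable {V : Type} (Γ : ArtinGraph V)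

noncomputable def evalL (a : V × Bool) : Γ.ArtinGroup :=
  if a.2 then Γ.gen a.1 else (Γ.gen a.1)⁻¹

noncomputable def eval (w : List (V × Bool)) : Γ.ArtinGroup := (w.map (evalL Γ)).prod

variable {Γ}

@[simp] lemma eval_nil : eval Γ ([] : List (V × Bool)) = 1 := rfl

@[simp] lemma eval_cons (a : V × Bool) (w : List (V × Bool)) :
    eval Γ (a :: w) = evalL Γ a * eval Γ w := by simp [eval]

@[simp] lemma eval_append (x y : List (V × Bool)) :
    eval Γ (x ++ y) = eval Γ x * eval Γ y := by simp [eval]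

@[simp] lemma evalL_linv (a : V × Bool) : evalL Γ (linv a) = (evalL Γ a)⁻¹ := by
  cases a with
  | mk v b => cases b <;> simp [evalL, linv]

lemma rel_eq_one {r : FreeGroup V} (hr : r ∈ Γ.rels) :
    PresentedGroup.mk Γ.rels r = 1 := by
  have : r ∈ Subgroup.normalClosure Γ.rels := Subgroup.subset_normalClosure hr
  exact (QuotientGroup.eq_one_iff r).mpr this

lemma gen_comm (hR : ∀ u v, Γ.m u v = 0 ∨ Γ.m u v = 2) {u v : V} (h : Γ.m u v ≠ 0) :
    Commute (Γ.gen u) (Γ.gen v) := by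
  have h2 : Γ.m u v = 2 := (hR u v).resolve_left h
  have hr : ArtinGraph.word u v 2 * (ArtinGraph.word v u 2)⁻¹ ∈ Γ.rels := ⟨u, v, h, by rw [h2]⟩
  have := rel_eq_one hr
  have hmap : PresentedGroup.mk Γ.rels (ArtinGraph.word u v 2) *
      (PresentedGroup.mk Γ.rels (ArtinGraph.word v u 2))⁻¹ = 1 := by
    rw [← map_inv, ← map_mul]; exact this
  have hw : ∀ x y : V, PresentedGroup.mk Γ.rels (ArtinGraph.word x y 2) = Γ.gen x * Γ.gen y := by
    intro x y
    show PresentedGroup.mk Γ.rels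
      (FreeGroup.of x * (FreeGroup.of y * 1)) = _
    simp [map_mul, gen, PresentedGroup.of]
    rfl
  rw [hw, hw] at hmap
  have : Γ.gen u * Γ.gen v = Γ.gen v * Γ.gen u := by
    have := mul_inv_eq_one.mp hmap
    exact this
  exact this

lemma evalL_comm (hR : ∀ u v, Γ.m u v = 0 ∨ Γ.m u v = 2) {a b : V × Bool}
    (h : Γ.m a.1 b.1 ≠ 0) : Commute (evalL Γ a) (evalL Γ b) := by
  have hc : Commute (Γ.gen a.1) (Γ.gen b.1) := gen_comm hR h
  cases a with
  | mk u s => cases b with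
    | mk v t =>
        cases s <;> cases t <;> simp [evalL] <;>
          first
            | exact hc.inv_left.inv_right
            | exact hc.inv_left
            | exact hc.inv_right
            | exact hc

lemma eval_step (hR : ∀ u v, Γ.m u v = 0 ∨ Γ.m u v = 2) {w w' : List (V × Bool)}
    (h : Step Γ w w') : eval Γ w = eval Γ w' := by
  induction h with
  | swap a b h y =>
      simp only [eval_cons, ← mul_assoc]
      rw [(evalL_comm hR h).eq]
  | cons c _ ih => simp [ih]

lemma eval_se (hR : ∀ u v, Γ.m u v = 0 ∨ Γ.m u v = 2) {w w' : List (V × Bool)}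
    (h : SE Γ w w') : eval Γ w = eval Γ w' := by
  induction h with
  | refl => rfl
  | tail _ h ih => exact ih.trans (eval_step hR h)

lemma eval_invword (w : List (V × Bool)) :
    eval Γ (w.reverse.map linv) = (eval Γ w)⁻¹ := by
  induction w with
  | nil => simp
  | cons a w ih =>
      simp only [List.map_reverse] at ih ⊢
      simp [ih]

end Raag

-- Part 3: locate helpers, cancelable patterns, reduced words
namespace Raag
open ArtinGraph

lemma locate {α : Type*} {p q r s : List α} {x y : α}
    (h : p ++ x :: q = r ++ y :: s) (hxy : x ≠ y) :
    (∃ t, r = p ++ x :: t ∧ q = t ++ y :: s) ∨ (∃ t, p = r ++ y :: t ∧ s = t ++ x :: q) := by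
  rcases List.append_eq_append_iff.mp h with ⟨a', h1, h2⟩ | ⟨c', h1, h2⟩
  · cases a' with
    | nil => simp at h2; exact absurd h2.1 hxy
    | cons e t =>
        simp only [List.cons_append, List.cons.injEq] at h2
        exact Or.inl ⟨t, by rw [h1, h2.1], h2.2⟩
  · cases c' with
    | nil => simp at h2; exact absurd h2.1.symm hxy
    | cons e t =>
        simp only [List.cons_append, List.cons.injEq] at h2
        exact Or.inr ⟨t, by rw [h1, h2.1], h2.2⟩

lemma locate2 {α : Type*} {p q r s : List α} {y : α}
    (h : p ++ q = r ++ y :: s) :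
    (∃ t, p = r ++ y :: t ∧ s = t ++ q) ∨ (∃ t, r = p ++ t ∧ q = t ++ y :: s) := by
  rcases List.append_eq_append_iff.mp h with ⟨a', h1, h2⟩ | ⟨c', h1, h2⟩
  · exact Or.inr ⟨a', h1, h2⟩
  · cases c' with
    | nil =>
        simp only [List.append_nil] at h1
        exact Or.inr ⟨[], by simp [h1], by simpa using h2.symm⟩
    | cons e t =>
        simp only [List.cons_append, List.cons.injEq] at h2
        exact Or.inl ⟨t, by rw [h1, h2.1], h2.2⟩

variable {V : Type} (Γ : ArtinGraph V)

/-- a word admits a (shuffled) cancellation -/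
def Cancelable (w : List (V × Bool)) : Prop :=
  ∃ (x : List (V × Bool)) (a : V × Bool) (y z : List (V × Bool)),
    w = x ++ a :: (y ++ linv a :: z) ∧ ∀ b ∈ y, Γ.m a.1 b.1 ≠ 0

def Red (w : List (V × Bool)) : Prop := ¬ Cancelable Γ w

/-- `w` contains a cancellable occurrence of `linv a` reachable from the front -/
def HasC (a : V × Bool) (w : List (V × Bool)) : Prop :=
  ∃ p q, w = p ++ linv a :: q ∧ ∀ b ∈ p, Γ.m a.1 b.1 ≠ 0

variable {Γ}

lemma Cancelable.two_le_length {w : List (V × Bool)} (h : Cancelable Γ w) :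
    2 ≤ w.length := by
  obtain ⟨x, a, y, z, hw, -⟩ := h
  subst hw; simp; omega

lemma red_nil : Red Γ ([] : List (V × Bool)) := fun h => by simpa using h.two_le_length

lemma red_singleton (a : V × Bool) : Red Γ [a] := fun h => by simpa using h.two_le_length

lemma Cancelable.append_left {w : List (V × Bool)} (h : Cancelable Γ w)
    (y : List (V × Bool)) : Cancelable Γ (w ++ y) := by
  obtain ⟨x, a, u, z, hw, hu⟩ := h
  exact ⟨x, a, u, z ++ y, by simp [hw], hu⟩

lemma Cancelable.append_right {w : List (V × Bool)} (h : Cancelable Γ w)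
    (x : List (V × Bool)) : Cancelable Γ (x ++ w) := by
  obtain ⟨x', a, u, z, hw, hu⟩ := h
  exact ⟨x ++ x', a, u, z, by simp [hw], hu⟩

lemma Red.of_append_left {x y : List (V × Bool)} (h : Red Γ (x ++ y)) : Red Γ x :=
  fun hc => h (hc.append_left y)

lemma Red.of_append_right {x y : List (V × Bool)} (h : Red Γ (x ++ y)) : Red Γ y :=
  fun hc => h (hc.append_right x)

lemma Red.of_cons {a : V × Bool} {w : List (V × Bool)} (h : Red Γ (a :: w)) : Red Γ w :=
  Red.of_append_right (x := [a]) h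

lemma Cancelable.reverse {w : List (V × Bool)} (h : Cancelable Γ w) :
    Cancelable Γ w.reverse := by
  obtain ⟨x, a, y, z, hw, hy⟩ := h
  refine ⟨z.reverse, linv a, y.reverse, x.reverse, ?_, ?_⟩
  · rw [hw]; simp [linv_linv]
  · intro b hb
    simp only [List.mem_reverse] at hb
    simpa using hy b hb

lemma red_reverse_iff {w : List (V × Bool)} : Red Γ w.reverse ↔ Red Γ w := by
  constructor
  · intro h hc; exact h hc.reverse
  · intro h hc
    have := hc.reverse
    rw [List.reverse_reverse] at this
    exact h this

lemma red_removeFront {p q : List (V × Bool)} {c : V × Bool}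
    (hw : Red Γ (p ++ c :: q)) (hp : ∀ b ∈ p, Γ.m c.1 b.1 ≠ 0) : Red Γ (p ++ q) := by
  rintro ⟨x, a, y, z, hpt, hy⟩
  apply hw
  rcases locate2 hpt with
    ⟨t, hp1, hs1⟩ | ⟨t, hx1, hq1⟩
  · -- a occurs in p : p = x ++ a :: t, y ++ linv a :: z = t ++ q
    rcases locate2 (hs1.symm : t ++ q = y ++ linv a :: z) with ⟨u, ht1, hz1⟩ | ⟨u, hy1, hq2⟩
    · -- linv a also in p-part: whole pattern inside p
      exact ⟨x, a, y, u ++ c :: q, by rw [hp1, ht1]; simp, hy⟩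
    · -- pattern spans the removed letter c : a ∈ p, linv a ∈ q
      have hac : Γ.m a.1 c.1 ≠ 0 := by
        have : a ∈ p := by rw [hp1]; simp
        have := hp a this
        rwa [Γ.symm] at this
      refine ⟨x, a, t ++ c :: u, z, by rw [hp1, hq2]; simp, ?_⟩
      intro b hb
      simp only [List.mem_append, List.mem_cons] at hb
      rcases hb with hb | hb | hb
      · exact hy b (by rw [hy1]; simp [hb])
      · subst hb; exact hac
      · exact hy b (by rw [hy1]; simp [hb])
  · -- pattern entirely in q
    exact ⟨p ++ c :: t, a, y, z, by rw [hq1]; simp, hy⟩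

lemma red_removeBack {p q : List (V × Bool)} {c : V × Bool}
    (hw : Red Γ (p ++ c :: q)) (hq : ∀ b ∈ q, Γ.m c.1 b.1 ≠ 0) : Red Γ (p ++ q) := by
  rw [← red_reverse_iff] at hw ⊢
  simp only [List.reverse_append, List.reverse_cons] at hw
  have hw' : Red Γ (q.reverse ++ c :: p.reverse) := by
    have : q.reverse ++ [c] ++ p.reverse = q.reverse ++ c :: p.reverse := by simp
    rwa [← this]
  have := red_removeFront hw' (by intro b hb; exact hq b (by simpa using hb))
  simpa using this

end Raag

-- Part 4a: the letter action on words
namespace Raag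
open ArtinGraph

variable {V : Type} (Γ : ArtinGraph V)

open Classical in
noncomputable def fL (a : V × Bool) : List (V × Bool) → List (V × Bool)
  | [] => [a]
  | b :: w => if b = linv a then w
      else if Γ.m a.1 b.1 = 0 then a :: b :: w else b :: fL a w

variable {Γ}

@[simp] lemma fL_nil (a : V × Bool) : fL Γ a [] = [a] := by simp [fL]

lemma fL_cancel {a b : V × Bool} (w : List (V × Bool)) (h : b = linv a) :
    fL Γ a (b :: w) = w := by simp [fL, h]

lemma fL_skip {a b : V × Bool} (w : List (V × Bool)) (h1 : b ≠ linv a)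
    (h2 : Γ.m a.1 b.1 = 0) : fL Γ a (b :: w) = a :: b :: w := by simp [fL, h1, h2]

lemma fL_adj {a b : V × Bool} (w : List (V × Bool)) (h1 : b ≠ linv a)
    (h2 : Γ.m a.1 b.1 ≠ 0) : fL Γ a (b :: w) = b :: fL Γ a w := by simp [fL, h1, h2]

lemma ne_linv_of_adj {a b : V × Bool} (h : Γ.m a.1 b.1 ≠ 0) : b ≠ linv a := by
  intro hb
  rw [hb] at h
  simp only [linv_fst] at h
  exact h (Γ.loopless a.1)

lemma fL_split {a : V × Bool} : ∀ {p w : List (V × Bool)} (q : List (V × Bool)),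
    w = p ++ linv a :: q → (∀ b ∈ p, Γ.m a.1 b.1 ≠ 0) → fL Γ a w = p ++ q := by
  intro p
  induction p with
  | nil =>
      intro w q hw _
      subst hw
      simpa using fL_cancel q rfl
  | cons b p ih =>
      intro w q hw hp
      subst hw
      have hb : Γ.m a.1 b.1 ≠ 0 := hp b (by simp)
      rw [List.cons_append, fL_adj _ (ne_linv_of_adj hb) hb,
        ih q rfl (fun x hx => hp x (by simp [hx]))]
      rfl

lemma fL_insert {a : V × Bool} : ∀ {w : List (V × Bool)}, ¬ HasC Γ a w →
    ∃ p q, w = p ++ q ∧ fL Γ a w = p ++ a :: q ∧ ∀ b ∈ p, Γ.m a.1 b.1 ≠ 0 := by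
  intro w
  induction w with
  | nil => intro _; exact ⟨[], [], rfl, by simp, by simp⟩
  | cons b w ih =>
      intro h
      by_cases hb : b = linv a
      · exact absurd ⟨[], w, by simp [hb], by simp⟩ h
      by_cases hadj : Γ.m a.1 b.1 = 0
      · exact ⟨[], b :: w, rfl, by rw [fL_skip w hb hadj]; rfl, by simp⟩
      · have hw : ¬ HasC Γ a w := by
          rintro ⟨p, q, rfl, hp⟩
          exact h ⟨b :: p, q, rfl, by
            intro x hx
            rcases List.mem_cons.mp hx with hx | hx
            · rw [hx]; exact hadj
            · exact hp x hx⟩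
        obtain ⟨p, q, hw1, hw2, hp⟩ := ih hw
        exact ⟨b :: p, q, by rw [hw1]; rfl, by rw [fL_adj w hb hadj, hw2]; rfl, by
          intro x hx
          rcases List.mem_cons.mp hx with hx | hx
          · rw [hx]; exact hadj
          · exact hp x hx⟩

lemma fL_se_cons {a : V × Bool} {w : List (V × Bool)} (h : ¬ HasC Γ a w) :
    SE Γ (fL Γ a w) (a :: w) := by
  obtain ⟨p, q, hw1, hw2, hp⟩ := fL_insert h
  rw [hw2, hw1]
  exact se_moveFront a q hp

lemma evalL_comm_eval (hR : ∀ u v, Γ.m u v = 0 ∨ Γ.m u v = 2) {a : V × Bool}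
    {p : List (V × Bool)} (hp : ∀ b ∈ p, Γ.m a.1 b.1 ≠ 0) :
    Commute (evalL Γ a) (eval Γ p) := by
  induction p with
  | nil => simp [Commute.one_right]
  | cons b p ih =>
      rw [eval_cons]
      exact Commute.mul_right (evalL_comm hR (hp b (by simp)))
        (ih (fun x hx => hp x (by simp [hx])))

lemma eval_fL (hR : ∀ u v, Γ.m u v = 0 ∨ Γ.m u v = 2) (a : V × Bool)
    (w : List (V × Bool)) : eval Γ (fL Γ a w) = evalL Γ a * eval Γ w := by
  by_cases h : HasC Γ a w
  · obtain ⟨p, q, hw, hp⟩ := h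
    rw [fL_split q hw hp, hw]
    simp only [eval_append, eval_cons, evalL_linv]
    rw [← mul_assoc, ← mul_assoc, (evalL_comm_eval hR hp).eq]
    simp [mul_assoc]
  · rw [eval_se hR (fL_se_cons h)]
    simp

end Raag

-- Part 4b: fL preserves reducedness
namespace Raag
open ArtinGraph

variable {V : Type} {Γ : ArtinGraph V}

lemma linv_ne_iff {a b : V × Bool} : b ≠ linv a ↔ a ≠ linv b := by
  constructor <;> intro h hb <;> apply h
  · rw [hb]; simp
  · rw [hb]; simp

lemma fL_red {a : V × Bool} : ∀ {w : List (V × Bool)}, Red Γ w → Red Γ (fL Γ a w) := by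
  intro w
  induction w with
  | nil => intro _; simpa using red_singleton (Γ := Γ) a
  | cons b w ih =>
      intro hw
      by_cases hb : b = linv a
      · rw [fL_cancel w hb]
        exact hw.of_cons
      by_cases hadj : Γ.m a.1 b.1 = 0
      · rw [fL_skip w hb hadj]
        rintro ⟨x, a', y, z, hx, hy⟩
        cases x with
        | nil =>
            simp only [List.nil_append, List.cons.injEq] at hx
            obtain ⟨rfl, hx2⟩ := hx
            cases y with
            | nil =>
                simp only [List.nil_append, List.cons.injEq] at hx2
                exact hb hx2.1
            | cons c y' =>
                simp only [List.cons_append, List.cons.injEq] at hx2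
                obtain ⟨rfl, -⟩ := hx2
                exact hy b (by simp) hadj
        | cons e x' =>
            simp only [List.cons_append, List.cons.injEq] at hx
            exact hw ⟨x', a', y, z, hx.2, hy⟩
      · -- adjacent case
        by_cases hC : HasC Γ a (b :: w)
        · obtain ⟨p, q, hw1, hp⟩ := hC
          rw [fL_split q hw1 hp]
          rw [hw1] at hw
          exact red_removeFront hw hp
        · have hCw : ¬ HasC Γ a w := by
            rintro ⟨p, q, rfl, hp⟩
            exact hC ⟨b :: p, q, rfl, by
              intro x hx
              rcases List.mem_cons.mp hx with hx | hx
              · rw [hx]; exact hadj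
              · exact hp x hx⟩
          have hred : Red Γ (fL Γ a w) := ih hw.of_cons
          obtain ⟨p, q, hw1, hw2, hp⟩ := fL_insert hCw
          rw [fL_adj w hb hadj]
          rintro ⟨x, a', y, z, hx, hy⟩
          cases x with
          | cons e x' =>
              simp only [List.cons_append, List.cons.injEq] at hx
              exact hred ⟨x', a', y, z, hx.2, hy⟩
          | nil =>
              simp only [List.nil_append, List.cons.injEq] at hx
              obtain ⟨rfl, hx2⟩ := hx
              rw [hw2] at hx2
              have hba : a ≠ linv b := linv_ne_iff.mp hb
              rcases locate hx2 hba with ⟨t, hyt, hqt⟩ | ⟨t, hpt, hzt⟩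
              · -- a inside y ; linv b inside q
                apply hw
                refine ⟨[], b, p ++ t, z, ?_, ?_⟩
                · rw [hw1, hqt]; simp
                · intro c hc
                  apply hy
                  rw [hyt]
                  rcases List.mem_append.mp hc with hc | hc
                  · simp [hc]
                  · simp [hc]
              · -- linv b inside p
                apply hw
                refine ⟨[], b, y, t ++ q, ?_, hy⟩
                rw [hw1, hpt]; simp

end Raag

-- Part 4c: tracking distinguished letters through swaps; fL respects SE
namespace Raag
open ArtinGraph

variable {V : Type} {Γ : ArtinGraph V}

lemma step_split {c : V × Bool} : ∀ {s s' π κ : List (V × Bool)}, Step Γ s s' →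
    s = π ++ c :: κ → (∀ b ∈ π, Γ.m c.1 b.1 ≠ 0) →
    ∃ π' κ', s' = π' ++ c :: κ' ∧ (∀ b ∈ π', Γ.m c.1 b.1 ≠ 0) ∧
      SE Γ (π ++ κ) (π' ++ κ') := by
  intro s s' π κ h
  induction h generalizing π κ with
  | swap a b hadj y =>
      intro hs hπ
      cases π with
      | nil =>
          simp only [List.nil_append, List.cons.injEq] at hs
          obtain ⟨rfl, rfl⟩ := hs
          refine ⟨[b], y, rfl, ?_, by rfl⟩
          intro x hx; simp only [List.mem_singleton] at hx; subst hx; exact hadj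
      | cons d π₁ =>
        cases π₁ with
        | nil =>
            simp only [List.cons_append, List.nil_append, List.cons.injEq] at hs
            obtain ⟨rfl, rfl, rfl⟩ := hs
            exact ⟨[], _, rfl, by simp, SE.refl _⟩
        | cons e π₂ =>
            simp only [List.cons_append, List.cons.injEq] at hs
            obtain ⟨rfl, rfl, rfl⟩ := hs
            refine ⟨b :: a :: π₂, κ, by simp, ?_, ?_⟩
            · intro x hx
              simp only [List.mem_cons] at hx
              rcases hx with rfl | rfl | hx
              · exact hπ x (by simp)
              · exact hπ x (by simp)
              · exact hπ x (by simp [hx])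
            · exact SE.single (Step.swap a b hadj (π₂ ++ κ))
  | @cons d w w' hst ih =>
      intro hs hπ
      cases π with
      | nil =>
          simp only [List.nil_append, List.cons.injEq] at hs
          obtain ⟨rfl, rfl⟩ := hs
          exact ⟨[], w', rfl, by simp, SE.single hst⟩
      | cons e π₂ =>
          simp only [List.cons_append, List.cons.injEq] at hs
          obtain ⟨rfl, hw⟩ := hs
          obtain ⟨π', κ', h1, h2, h3⟩ := ih hw (fun b hb => hπ b (by simp [hb]))
          refine ⟨d :: π', κ', by rw [h1]; rfl, ?_, ?_⟩
          · intro x hx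
            rcases List.mem_cons.mp hx with rfl | hx
            · exact hπ x (by simp)
            · exact h2 x hx
          · exact h3.cons_congr d

lemma se_cons_split {c : V × Bool} {w s : List (V × Bool)} (h : SE Γ (c :: w) s) :
    ∃ π κ, s = π ++ c :: κ ∧ (∀ b ∈ π, Γ.m c.1 b.1 ≠ 0) ∧ SE Γ w (π ++ κ) := by
  induction h with
  | refl => exact ⟨[], w, rfl, by simp, by rfl⟩
  | tail _ hstep ih =>
      obtain ⟨π, κ, h1, h2, h3⟩ := ih
      obtain ⟨π', κ', h1', h2', h3'⟩ := step_split hstep h1 h2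
      exact ⟨π', κ', h1', h2', h3.trans h3'⟩

lemma se_concat_split {c : V × Bool} {w s : List (V × Bool)} (h : SE Γ (w ++ [c]) s) :
    ∃ π κ, s = π ++ c :: κ ∧ (∀ b ∈ κ, Γ.m c.1 b.1 ≠ 0) ∧ SE Γ w (π ++ κ) := by
  have h' : SE Γ (c :: w.reverse) s.reverse := by
    have := se_reverse h
    simpa using this
  obtain ⟨π, κ, h1, h2, h3⟩ := se_cons_split h'
  refine ⟨κ.reverse, π.reverse, ?_, ?_, ?_⟩
  · have := congrArg List.reverse h1
    simpa using this
  · intro b hb; exact h2 b (by simpa using hb)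
  · have := se_reverse h3
    simpa using this

lemma hasC_step {a : V × Bool} {w w' : List (V × Bool)} (h : Step Γ w w')
    (hc : HasC Γ a w) : HasC Γ a w' := by
  obtain ⟨p, q, h1, h2⟩ := hc
  obtain ⟨π', κ', h1', h2', -⟩ := step_split h h1 h2
  exact ⟨π', κ', h1', h2'⟩

lemma fL_se_step {a : V × Bool} {w w' : List (V × Bool)} (h : Step Γ w w') :
    SE Γ (fL Γ a w) (fL Γ a w') := by
  by_cases hc : HasC Γ a w
  · obtain ⟨p, q, h1, h2⟩ := hc
    obtain ⟨π', κ', h1', h2', h3⟩ := step_split h h1 h2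
    rw [fL_split q h1 h2, fL_split κ' h1' h2']
    exact h3
  · have hc' : ¬ HasC Γ a w' := fun hh => hc (hasC_step h.symm hh)
    exact (fL_se_cons hc).trans (((SE.single h).cons_congr a).trans (fL_se_cons hc').symm)

lemma fL_se {a : V × Bool} {w w' : List (V × Bool)} (h : SE Γ w w') :
    SE Γ (fL Γ a w) (fL Γ a w') := by
  induction h with
  | refl => rfl
  | tail _ hstep ih => exact ih.trans (fL_se_step hstep)

lemma hasC_se {a : V × Bool} {w w' : List (V × Bool)} (h : SE Γ w w')
    (hc : HasC Γ a w) : HasC Γ a w' := by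
  induction h with
  | refl => exact hc
  | tail _ hstep ih => exact hasC_step hstep ih

end Raag

-- Part 4d: inverse and commutation properties of fL
namespace Raag
open ArtinGraph

variable {V : Type} {Γ : ArtinGraph V}

lemma fL_fL (a : V × Bool) {w : List (V × Bool)} (hw : Red Γ w) :
    SE Γ (fL Γ (linv a) (fL Γ a w)) w := by
  by_cases h : HasC Γ a w
  · obtain ⟨p, q, hw1, hp⟩ := h
    rw [fL_split q hw1 hp]
    have hnc : ¬ HasC Γ (linv a) (p ++ q) := by
      rintro ⟨r, s, hrs, hr⟩
      rw [linv_linv] at hrs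
      apply hw
      rcases locate2 hrs with ⟨t, hpt, hst⟩ | ⟨t, hrt, hqt⟩
      · refine ⟨r, a, t, q, by rw [hw1, hpt]; simp, ?_⟩
        intro c hc; exact hp c (by rw [hpt]; simp [hc])
      · refine ⟨p, linv a, t, s, by rw [hw1, hqt, linv_linv], ?_⟩
        intro c hc
        exact hr c (by rw [hrt]; simp [hc])
    refine (fL_se_cons hnc).trans ?_
    rw [hw1]
    exact (se_moveFront (linv a) q hp).symm
  · obtain ⟨p, q, h1, h2, hp⟩ := fL_insert h
    rw [h2, fL_split (a := linv a) q (by rw [linv_linv]) hp, ← h1]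

lemma fst_ne_of_adj {a b : V × Bool} (hab : Γ.m a.1 b.1 ≠ 0) : a.1 ≠ b.1 := by
  intro h
  rw [h] at hab
  exact hab (Γ.loopless _)

/-- helper for the case where both letters cancel -/
lemma fL_both {a b : V × Bool} (p t s : List (V × Bool))
    (hp : ∀ c ∈ p, Γ.m a.1 c.1 ≠ 0)
    (hr : ∀ c ∈ p ++ linv a :: t, Γ.m b.1 c.1 ≠ 0) :
    fL Γ b (fL Γ a (p ++ linv a :: (t ++ linv b :: s))) = p ++ (t ++ s) ∧
    fL Γ a (fL Γ b (p ++ linv a :: (t ++ linv b :: s))) = p ++ (t ++ s) := by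
  have hpt : ∀ c ∈ p ++ t, Γ.m b.1 c.1 ≠ 0 := by
    intro c hc
    apply hr c
    rcases List.mem_append.mp hc with hc | hc
    · simp [hc]
    · simp [hc]
  constructor
  · rw [fL_split (t ++ linv b :: s) rfl hp,
      fL_split (a := b) (p := p ++ t) s (by simp) hpt]
    simp
  · rw [fL_split (a := b) (p := p ++ linv a :: t) s (by simp) hr,
      fL_split (a := a) (p := p) (t ++ s) (by simp) hp]

/-- helper: `a` cancels, `b` does not -/
lemma fL_swap_aux {a b : V × Bool} (hab : Γ.m a.1 b.1 ≠ 0) {w : List (V × Bool)}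
    (hca : HasC Γ a w) (hcb : ¬ HasC Γ b w) :
    SE Γ (fL Γ a (fL Γ b w)) (fL Γ b (fL Γ a w)) := by
  have hba : Γ.m b.1 a.1 ≠ 0 := by rwa [Γ.symm]
  obtain ⟨p, q, hw1, hp⟩ := hca
  have hqb : ¬ HasC Γ b (p ++ q) := by
    rintro ⟨r, s, hrs, hr⟩
    rcases locate2 hrs with ⟨t, hpt, hst⟩ | ⟨t, hrt, hqt⟩
    · exact hcb ⟨r, t ++ linv a :: q, by rw [hw1, hpt]; simp, hr⟩
    · refine hcb ⟨p ++ linv a :: t, s, by rw [hw1, hqt]; simp, ?_⟩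
      intro c hc
      simp only [List.mem_append, List.mem_cons] at hc
      rcases hc with hc | hc | hc
      · exact hr c (by rw [hrt]; simp [hc])
      · subst hc; simpa using hba
      · exact hr c (by rw [hrt]; simp [hc])
  obtain ⟨r, s, hr1, hr2, hrb⟩ := fL_insert hcb
  rw [fL_split q hw1 hp, hr2]
  rw [hw1] at hr1
  rcases locate2 hr1.symm with ⟨t, hpt, hst⟩ | ⟨t, hrt, hqt⟩
  · -- r = p ++ linv a :: t, q = t ++ s
    have h2 : fL Γ a (r ++ b :: s) = p ++ (t ++ b :: s) :=
      fL_split (t ++ b :: s) (by rw [hpt]; simp) hp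
    rw [h2]
    have h3 : SE Γ (fL Γ b (p ++ q)) (b :: (p ++ q)) := fL_se_cons hqb
    refine SE.trans ?_ h3.symm
    rw [hst]
    have hadj : ∀ c ∈ p ++ t, Γ.m b.1 c.1 ≠ 0 := by
      intro c hc
      apply hrb c
      rw [hpt]
      rcases List.mem_append.mp hc with hc | hc
      · simp [hc]
      · simp [hc]
    have hmv := se_moveFront (Γ := Γ) b (p := p ++ t) s hadj
    simpa using hmv
  · -- p = r ++ t, s = t ++ linv a :: q
    have h2 : fL Γ a (r ++ b :: s) = (r ++ b :: t) ++ q := by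
      apply fL_split q (by rw [hqt]; simp)
      intro c hc
      simp only [List.mem_append, List.mem_cons] at hc
      rcases hc with hc | hc | hc
      · exact hp c (by rw [hrt]; simp [hc])
      · subst hc; exact hab
      · exact hp c (by rw [hrt]; simp [hc])
    rw [h2]
    have h3 : SE Γ (fL Γ b (p ++ q)) (b :: (p ++ q)) := fL_se_cons hqb
    refine SE.trans ?_ h3.symm
    rw [hrt]
    have hmv := se_moveFront (Γ := Γ) b (p := r) (t ++ q) hrb
    have : SE Γ (r ++ b :: (t ++ q)) (b :: (r ++ (t ++ q))) := hmv
    simpa using this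

lemma fL_swap {a b : V × Bool} (hab : Γ.m a.1 b.1 ≠ 0) (w : List (V × Bool)) :
    SE Γ (fL Γ a (fL Γ b w)) (fL Γ b (fL Γ a w)) := by
  have hba : Γ.m b.1 a.1 ≠ 0 := by rwa [Γ.symm]
  have hne : a.1 ≠ b.1 := fst_ne_of_adj hab
  by_cases hca : HasC Γ a w <;> by_cases hcb : HasC Γ b w
  · -- both cancel
    obtain ⟨p, q, hw1, hp⟩ := hca
    obtain ⟨r, s, hw2, hr⟩ := hcb
    have hll : linv a ≠ linv b := by
      intro h
      have := congrArg Prod.fst h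
      simp only [linv_fst] at this
      exact hne this
    rcases locate (hw1.symm.trans hw2) hll with ⟨t, hrt, hqt⟩ | ⟨t, hpt, hst⟩
    · -- r = p ++ linv a :: t, q = t ++ linv b :: s
      have hradj : ∀ c ∈ p ++ linv a :: t, Γ.m b.1 c.1 ≠ 0 := by
        intro c hc; exact hr c (by rw [hrt]; exact hc)
      obtain ⟨e1, e2⟩ := fL_both (Γ := Γ) p t s hp hradj
      rw [hw1, hqt, e1, e2]
    · -- p = r ++ linv b :: t, s = t ++ linv a :: q
      have hpadj : ∀ c ∈ r ++ linv b :: t, Γ.m a.1 c.1 ≠ 0 := by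
        intro c hc; exact hp c (by rw [hpt]; exact hc)
      obtain ⟨e1, e2⟩ := fL_both (Γ := Γ) r t q hr hpadj
      rw [hw2, hst, e1, e2]
  · exact fL_swap_aux hab hca hcb
  · exact (fL_swap_aux hba hcb hca).symm
  · -- neither cancels
    have h1 : ¬ HasC Γ a (fL Γ b w) := by
      obtain ⟨r, s, hr1, hr2, hrb⟩ := fL_insert hcb
      rw [hr2]
      rintro ⟨p', q', hpq, hp'⟩
      have hbla : b ≠ linv a := by
        intro h; exact hne (by rw [h]; rfl)
      rcases locate hpq hbla with ⟨t, hp't, hst⟩ | ⟨t, hrt, hq't⟩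
      · exact hca ⟨r ++ t, q', by rw [hr1, hst]; simp, by
          intro c hc
          rcases List.mem_append.mp hc with hc | hc
          · exact hp' c (by rw [hp't]; simp [hc])
          · exact hp' c (by rw [hp't]; simp [hc])⟩
      · exact hca ⟨p', t ++ s, by rw [hr1, hrt]; simp, hp'⟩
    have h2 : ¬ HasC Γ b (fL Γ a w) := by
      obtain ⟨r, s, hr1, hr2, hra⟩ := fL_insert hca
      rw [hr2]
      rintro ⟨p', q', hpq, hp'⟩
      have halb : a ≠ linv b := by
        intro h; exact hne (by rw [h]; rfl)
      rcases locate hpq halb with ⟨t, hp't, hst⟩ | ⟨t, hrt, hq't⟩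
      · exact hcb ⟨r ++ t, q', by rw [hr1, hst]; simp, by
          intro c hc
          rcases List.mem_append.mp hc with hc | hc
          · exact hp' c (by rw [hp't]; simp [hc])
          · exact hp' c (by rw [hp't]; simp [hc])⟩
      · exact hcb ⟨p', t ++ s, by rw [hr1, hrt]; simp, hp'⟩
    have e1 : SE Γ (fL Γ a (fL Γ b w)) (a :: b :: w) :=
      (fL_se_cons h1).trans ((fL_se_cons hcb).cons_congr a)
    have e2 : SE Γ (fL Γ b (fL Γ a w)) (b :: a :: w) :=
      (fL_se_cons h2).trans ((fL_se_cons hca).cons_congr b)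
    refine e1.trans (SE.trans ?_ e2.symm)
    exact SE.single (Step.swap a b hab w)

end Raag

-- Part 5: the action on reduced words; normal forms and uniqueness
namespace Raag
open ArtinGraph

variable {V : Type}

def RWSetoid (Γ : ArtinGraph V) : Setoid {w : List (V × Bool) // Red Γ w} :=
  ⟨fun u v => SE Γ u.1 v.1, ⟨fun _ => SE.refl _, SE.symm, SE.trans⟩⟩

def X (Γ : ArtinGraph V) := Quotient (RWSetoid Γ)

variable {Γ : ArtinGraph V}

noncomputable def Fmap (a : V × Bool) : X Γ → X Γ := fun x =>
  Quotient.liftOn x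
    (fun w => Quotient.mk (RWSetoid Γ) ⟨fL Γ a w.1, fL_red w.2⟩)
    (fun _ _ h => Quotient.sound (fL_se h))

@[simp] lemma Fmap_mk (a : V × Bool) (w : List (V × Bool)) (hw : Red Γ w) :
    Fmap a (Quotient.mk (RWSetoid Γ) ⟨w, hw⟩) =
      Quotient.mk (RWSetoid Γ) ⟨fL Γ a w, fL_red hw⟩ := rfl

noncomputable def Fequiv (a : V × Bool) : Equiv.Perm (X Γ) where
  toFun := Fmap a
  invFun := Fmap (linv a)
  left_inv := by
    intro x
    induction x using Quotient.ind with
    | _ w => exact Quotient.sound (fL_fL a w.2)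
  right_inv := by
    intro x
    induction x using Quotient.ind with
    | _ w =>
        have := fL_fL (Γ := Γ) (linv a) w.2
        rw [linv_linv] at this
        exact Quotient.sound this

lemma Fequiv_linv (a : V × Bool) : (Fequiv (Γ := Γ) (linv a)) = (Fequiv a)⁻¹ := by
  ext x
  rfl

lemma Fequiv_comm {u v : V} (h : Γ.m u v ≠ 0) :
    Fequiv (Γ := Γ) ((u, true)) * Fequiv ((v, true)) =
      Fequiv ((v, true)) * Fequiv ((u, true)) := by
  ext x
  induction x using Quotient.ind with
  | _ w =>
      exact Quotient.sound (fL_swap h w.1)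

noncomputable def phi (Γ : ArtinGraph V) (hR : ∀ u v, Γ.m u v = 0 ∨ Γ.m u v = 2) :
    Γ.ArtinGroup →* Equiv.Perm (X Γ) := by
  apply PresentedGroup.toGroup (f := fun v => Fequiv (Γ := Γ) (v, true))
  rintro r ⟨u, v, hm, rfl⟩
  have h2 : ∀ x y : V, FreeGroup.lift (fun v => Fequiv (Γ := Γ) (v, true))
      (ArtinGraph.word x y 2) = Fequiv (x, true) * Fequiv (y, true) := by
    intro x y
    show FreeGroup.lift _ (FreeGroup.of x * (FreeGroup.of y * 1)) = _
    simp
  rw [(hR u v).resolve_left hm]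
  rw [map_mul, map_inv, h2, h2, Fequiv_comm hm]
  group

lemma phi_gen (hR : ∀ u v, Γ.m u v = 0 ∨ Γ.m u v = 2) (v : V) :
    phi Γ hR (Γ.gen v) = Fequiv (v, true) :=
  PresentedGroup.toGroup.of _

lemma phi_evalL (hR : ∀ u v, Γ.m u v = 0 ∨ Γ.m u v = 2) (a : V × Bool) :
    phi Γ hR (evalL Γ a) = Fequiv a := by
  cases a with
  | mk v b =>
      cases b
      · show phi Γ hR ((Γ.gen v)⁻¹) = _
        rw [map_inv, phi_gen]
        rw [← Fequiv_linv (v, true)]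
        rfl
      · exact phi_gen hR v

noncomputable def nf (Γ : ArtinGraph V) : List (V × Bool) → List (V × Bool)
  | [] => []
  | a :: w => fL Γ a (nf Γ w)

lemma nf_red : ∀ w : List (V × Bool), Red Γ (nf Γ w)
  | [] => red_nil
  | a :: w => fL_red (nf_red w)

lemma eval_nf (hR : ∀ u v, Γ.m u v = 0 ∨ Γ.m u v = 2) :
    ∀ w : List (V × Bool), eval Γ (nf Γ w) = eval Γ w
  | [] => rfl
  | a :: w => by
      show eval Γ (fL Γ a (nf Γ w)) = _
      rw [eval_fL hR, eval_nf hR w, eval_cons]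

lemma nf_mem {c : V × Bool} : ∀ {w : List (V × Bool)}, c ∈ nf Γ w → c ∈ w := by
  intro w
  induction w with
  | nil => intro h; exact absurd h (by simp [nf])
  | cons a w ih =>
      intro h
      show c ∈ a :: w
      by_cases hC : HasC Γ a (nf Γ w)
      · obtain ⟨p, q, h1, h2⟩ := hC
        rw [show nf Γ (a :: w) = fL Γ a (nf Γ w) from rfl, fL_split q h1 h2] at h
        have : c ∈ nf Γ w := by
          rw [h1]
          rcases List.mem_append.mp h with h | h
          · simp [h]
          · simp [h]
        simp [ih this]
      · obtain ⟨p, q, h1, h2, -⟩ := fL_insert hC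
        rw [show nf Γ (a :: w) = fL Γ a (nf Γ w) from rfl, h2] at h
        simp only [List.mem_append, List.mem_cons] at h
        rcases h with h | h | h
        · have : c ∈ nf Γ w := by rw [h1]; simp [h]
          simp [ih this]
        · simp [h]
        · have : c ∈ nf Γ w := by rw [h1]; simp [h]
          simp [ih this]

lemma nf_se {w : List (V × Bool)} (hw : Red Γ w) : SE Γ (nf Γ w) w := by
  induction w with
  | nil => rfl
  | cons a w ih =>
      have hw' : Red Γ w := hw.of_cons
      have h1 : SE Γ (fL Γ a (nf Γ w)) (fL Γ a w) := fL_se (ih hw')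
      have h2 : ¬ HasC Γ a w := by
        rintro ⟨p, q, h1', h2'⟩
        exact hw ⟨[], a, p, q, by rw [h1']; rfl, h2'⟩
      exact h1.trans (fL_se_cons h2)

lemma phi_eval (hR : ∀ u v, Γ.m u v = 0 ∨ Γ.m u v = 2) :
    ∀ w : List (V × Bool),
      phi Γ hR (eval Γ w) (Quotient.mk (RWSetoid Γ) ⟨[], red_nil⟩) =
        Quotient.mk (RWSetoid Γ) ⟨nf Γ w, nf_red w⟩
  | [] => by simp [eval_nil, map_one]; rfl
  | a :: w => by
      rw [eval_cons, map_mul]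
      show (phi Γ hR (evalL Γ a)) ((phi Γ hR (eval Γ w)) _) = _
      rw [phi_eval hR w, phi_evalL]
      rfl

/-- Uniqueness of reduced words up to shuffles. -/
theorem red_unique (hR : ∀ u v, Γ.m u v = 0 ∨ Γ.m u v = 2)
    {w w' : List (V × Bool)} (hw : Red Γ w) (hw' : Red Γ w')
    (h : eval Γ w = eval Γ w') : SE Γ w w' := by
  have h1 := phi_eval hR w
  have h2 := phi_eval hR w'
  rw [h] at h1
  rw [h1] at h2
  have h3 : SE Γ (nf Γ w) (nf Γ w') := Quotient.exact h2
  exact ((nf_se hw).symm.trans h3).trans (nf_se hw')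

end Raag


-- Part 6: standard parabolics, conjugation lemmas
namespace Raag
open ArtinGraph

variable {V : Type} {Γ : ArtinGraph V}

lemma evalL_mem_std {S : Set V} {c : V × Bool} (h : c.1 ∈ S) : evalL Γ c ∈ Γ.std S := by
  have hg : Γ.gen c.1 ∈ Γ.std S := Subgroup.subset_closure ⟨c.1, h, rfl⟩
  cases hb : c.2 <;> simp [evalL, hb, hg, Subgroup.inv_mem _ hg]

lemma eval_mem_std {S : Set V} {w : List (V × Bool)} (h : ∀ c ∈ w, c.1 ∈ S) :
    eval Γ w ∈ Γ.std S := by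
  induction w with
  | nil => simp [Subgroup.one_mem]
  | cons a w ih =>
      rw [eval_cons]
      exact Subgroup.mul_mem _ (evalL_mem_std (h a (by simp)))
        (ih fun c hc => h c (by simp [hc]))

lemma mem_std_word {S : Set V} {x : Γ.ArtinGroup} (h : x ∈ Γ.std S) :
    ∃ w : List (V × Bool), eval Γ w = x ∧ ∀ c ∈ w, c.1 ∈ S := by
  induction h using Subgroup.closure_induction with
  | mem y hy =>
      obtain ⟨v, hv, rfl⟩ := hy
      exact ⟨[(v, true)], by simp [evalL], by simpa using hv⟩
  | one => exact ⟨[], by simp, by simp⟩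
  | mul y z _ _ hy hz =>
      obtain ⟨wy, hy1, hy2⟩ := hy
      obtain ⟨wz, hz1, hz2⟩ := hz
      refine ⟨wy ++ wz, by simp [hy1, hz1], ?_⟩
      intro c hc
      rcases List.mem_append.mp hc with hc | hc
      · exact hy2 c hc
      · exact hz2 c hc
  | inv y _ hy =>
      obtain ⟨wy, hy1, hy2⟩ := hy
      refine ⟨wy.reverse.map linv, by rw [eval_invword, hy1], ?_⟩
      intro c hc
      simp only [List.mem_map, List.mem_reverse] at hc
      obtain ⟨d, hd, rfl⟩ := hc
      simpa using hy2 d hd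

lemma mem_std_red {S : Set V} {x : Γ.ArtinGroup}
    (hR : ∀ u v, Γ.m u v = 0 ∨ Γ.m u v = 2) (h : x ∈ Γ.std S) :
    ∃ w : List (V × Bool), Red Γ w ∧ eval Γ w = x ∧ ∀ c ∈ w, c.1 ∈ S := by
  obtain ⟨w, hw1, hw2⟩ := mem_std_word h
  exact ⟨nf Γ w, nf_red w, by rw [eval_nf hR, hw1], fun c hc => hw2 c (nf_mem hc)⟩

lemma exists_red (hR : ∀ u v, Γ.m u v = 0 ∨ Γ.m u v = 2) (x : Γ.ArtinGroup) :
    ∃ w : List (V × Bool), Red Γ w ∧ eval Γ w = x := by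
  suffices h : ∃ w : List (V × Bool), eval Γ w = x by
    obtain ⟨w, hw⟩ := h
    exact ⟨nf Γ w, nf_red w, by rw [eval_nf hR, hw]⟩
  obtain ⟨f, rfl⟩ := PresentedGroup.mk_surjective Γ.rels x
  induction f using FreeGroup.induction_on with
  | C1 => exact ⟨[], by simp; rfl⟩
  | of v => exact ⟨[(v, true)], by simp [evalL]; rfl⟩
  | inv_of v _ => exact ⟨[(v, false)], by simp [evalL]; rfl⟩
  | mul y z hy hz =>
      obtain ⟨wy, hy1⟩ := hy
      obtain ⟨wz, hz1⟩ := hz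
      exact ⟨wy ++ wz, by simp [hy1, hz1]; rfl⟩

lemma commute_gen_eval (hR : ∀ u v, Γ.m u v = 0 ∨ Γ.m u v = 2) {v : V}
    {w : List (V × Bool)} (h : ∀ c ∈ w, Γ.m v c.1 ≠ 0) :
    Commute (Γ.gen v) (eval Γ w) := by
  have := evalL_comm_eval (Γ := Γ) hR (a := (v, true)) (p := w) h
  simpa [evalL] using this

-- conjP lemmas
section ConjP

variable {G : Type*} [Group G]

lemma mem_conjP {g x : G} {H : Subgroup G} :
    x ∈ ArtinGraph.conjP g H ↔ g⁻¹ * x * g ∈ H := by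
  simp only [ArtinGraph.conjP, Subgroup.mem_map, MulEquiv.coe_toMonoidHom,
    MulAut.conj_apply]
  constructor
  · rintro ⟨y, hy, rfl⟩
    convert hy using 1
    group
  · intro h
    refine ⟨g⁻¹ * x * g, h, ?_⟩
    group

lemma conjP_one (H : Subgroup G) : ArtinGraph.conjP 1 H = H := by
  ext x
  rw [mem_conjP]
  simp

lemma conjP_conjP (g h : G) (H : Subgroup G) :
    ArtinGraph.conjP g (ArtinGraph.conjP h H) = ArtinGraph.conjP (g * h) H := by
  ext x
  rw [mem_conjP, mem_conjP, mem_conjP]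
  have he : (g * h)⁻¹ * x * (g * h) = h⁻¹ * (g⁻¹ * x * g) * h := by group
  rw [he]

lemma conjP_inf (g : G) (H K : Subgroup G) :
    ArtinGraph.conjP g (H ⊓ K) = ArtinGraph.conjP g H ⊓ ArtinGraph.conjP g K := by
  ext x
  rw [Subgroup.mem_inf, mem_conjP, mem_conjP, mem_conjP, Subgroup.mem_inf]

end ConjP

lemma isParabolic_conjP {P : Subgroup Γ.ArtinGroup} (g : Γ.ArtinGroup)
    (h : Γ.IsParabolic P) : Γ.IsParabolic (ArtinGraph.conjP g P) := by
  obtain ⟨S, k, rfl⟩ := h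
  exact ⟨S, g * k, by rw [conjP_conjP]⟩

end Raag

-- Part 7: Levi's lemma for partially commutative shuffles
namespace Raag
open ArtinGraph

variable {V : Type} {Γ : ArtinGraph V}

lemma levi : ∀ (n : ℕ) (t₁ t₂ s₁ s₂ : List (V × Bool)), t₁.length ≤ n →
    Red Γ (t₁ ++ t₂) → Red Γ (s₁ ++ s₂) → SE Γ (t₁ ++ t₂) (s₁ ++ s₂) →
    ∃ p q r z, SE Γ t₁ (p ++ q) ∧ SE Γ t₂ (r ++ z) ∧ SE Γ s₁ (p ++ r) ∧
      SE Γ s₂ (q ++ z) ∧ ∀ b ∈ q, ∀ c ∈ r, Γ.m b.1 c.1 ≠ 0 := by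
  intro n
  induction n with
  | zero =>
      intro t₁ t₂ s₁ s₂ hl _ _ h
      have ht : t₁ = [] := List.eq_nil_of_length_eq_zero (Nat.le_zero.mp hl)
      subst ht
      exact ⟨[], [], s₁, s₂, by rfl, h, by rfl, by rfl, by simp⟩
  | succ n ih =>
      intro t₁ t₂ s₁ s₂ hl hrt hrs h
      cases t₁ with
      | nil => exact ⟨[], [], s₁, s₂, by rfl, h, by rfl, by rfl, by simp⟩
      | cons c t₁' =>
          obtain ⟨π, κ, hs, hπ, hse⟩ := se_cons_split (c := c) (w := t₁' ++ t₂) h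
          rcases locate2 hs with ⟨u, hs1, hs2⟩ | ⟨u, hs1, hs2⟩
          ·
            -- locate2 hs : s₁ ++ s₂ = π ++ c :: κ gives
            -- left: ∃ t, s₁ = π ++ c :: t ∧ κ = t ++ s₂
            have hred1 : Red Γ (t₁' ++ t₂) := hrt.of_cons
            have hred2 : Red Γ ((π ++ u) ++ s₂) := by
              have : Red Γ (π ++ c :: (u ++ s₂)) := by
                rw [hs1] at hrs
                simpa using hrs
              have := red_removeFront this hπ
              simpa using this
            have hse2 : SE Γ (t₁' ++ t₂) ((π ++ u) ++ s₂) := by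
              rw [hs2] at hse
              simpa using hse
            obtain ⟨p, q, r, z, e1, e2, e3, e4, hadj⟩ :=
              ih t₁' t₂ (π ++ u) s₂ (by simpa using Nat.succ_le_succ_iff.mp hl)
                hred1 hred2 hse2
            refine ⟨c :: p, q, r, z, ?_, e2, ?_, e4, hadj⟩
            · exact (e1.cons_congr c : SE Γ (c :: t₁') (c :: (p ++ q)))
            · rw [hs1]
              exact (se_moveFront c u hπ).trans (e3.cons_congr c)
          · -- right: ∃ t, π = s₁ ++ t ∧ s₂ = t ++ c :: κ
            have hπ' : ∀ b ∈ s₁ ++ u, Γ.m c.1 b.1 ≠ 0 := by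
              intro b hb; exact hπ b (by rw [hs1]; exact hb)
            have hred1 : Red Γ (t₁' ++ t₂) := hrt.of_cons
            have hred2 : Red Γ (s₁ ++ (u ++ κ)) := by
              have h0 : Red Γ ((s₁ ++ u) ++ c :: κ) := by
                rw [hs2] at hrs
                simpa using hrs
              have := red_removeFront h0 hπ'
              simpa using this
            have hse2 : SE Γ (t₁' ++ t₂) (s₁ ++ (u ++ κ)) := by
              rw [hs1] at hse
              simpa using hse
            obtain ⟨p, q, r, z, e1, e2, e3, e4, hadj⟩ :=
              ih t₁' t₂ s₁ (u ++ κ) (by simpa using Nat.succ_le_succ_iff.mp hl)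
                hred1 hred2 hse2
            have hpmem : ∀ b ∈ p, Γ.m c.1 b.1 ≠ 0 := by
              intro b hb
              apply hπ' b
              have : b ∈ p ++ r := by simp [hb]
              rw [← e3.mem_iff] at this
              simp [this]
            refine ⟨p, c :: q, r, z, ?_, e2, e3, ?_, ?_⟩
            · refine (e1.cons_congr c).trans ?_
              exact (se_moveFront c q hpmem).symm
            · rw [hs2]
              refine SE.trans ?_ ((e4.cons_congr c))
              have hu : ∀ b ∈ u, Γ.m c.1 b.1 ≠ 0 := fun b hb => hπ' b (by simp [hb])
              exact se_moveFront c κ hu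
            · intro b hb d hd
              rcases List.mem_cons.mp hb with rfl | hb
              · apply hπ' d
                have : d ∈ p ++ r := by simp [hd]
                rw [← e3.mem_iff] at this
                simp [this]
              · exact hadj b hb d hd

end Raag

-- Part 8: the intersection theorem
namespace Raag
open ArtinGraph

variable {V : Type} {Γ : ArtinGraph V}

/-- Case 3 : the conjugator has no front-movable `A`-letter and no back-movable
`B`-letter; then the intersection is the standard parabolic on the common
adjacent vertices. -/
lemma case3 (hR : ∀ u v, Γ.m u v = 0 ∨ Γ.m u v = 2) {A B : Set V}
    {w : List (V × Bool)} (hw : Red Γ w)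
    (h1 : ¬ ∃ p c q, w = p ++ c :: q ∧ (∀ b ∈ p, Γ.m c.1 b.1 ≠ 0) ∧ c.1 ∈ A)
    (h2 : ¬ ∃ p c q, w = p ++ c :: q ∧ (∀ b ∈ q, Γ.m c.1 b.1 ≠ 0) ∧ c.1 ∈ B) :
    Γ.std A ⊓ ArtinGraph.conjP (eval Γ w) (Γ.std B) =
      Γ.std {v | v ∈ A ∧ v ∈ B ∧ ∀ c ∈ w, Γ.m v c.1 ≠ 0} := by
  set D : Set V := {v | v ∈ A ∧ v ∈ B ∧ ∀ c ∈ w, Γ.m v c.1 ≠ 0} with hD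
  apply le_antisymm
  · -- hard direction
    intro x hx
    rw [Subgroup.mem_inf] at hx
    obtain ⟨hxA, hxB⟩ := hx
    rw [mem_conjP] at hxB
    obtain ⟨u, hu1, hu2, hu3⟩ := mem_std_red hR hxA
    obtain ⟨v, hv1, hv2, hv3⟩ := mem_std_red hR hxB
    have heval : eval Γ (u ++ w) = eval Γ (w ++ v) := by
      simp only [eval_append, hu2, hv2]
      group
    have hruw : Red Γ (u ++ w) := by
      rintro ⟨x₀, a, y, z, heq, hy⟩
      rcases locate2 (heq : u ++ w = x₀ ++ a :: (y ++ linv a :: z)) with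
        ⟨t, hu4, hY⟩ | ⟨t, hx4, hw4⟩
      · -- a inside u ; hY : y ++ linv a :: z = t ++ w
        rcases locate2 (hY.symm : t ++ w = y ++ linv a :: z) with
          ⟨s, ht5, hz5⟩ | ⟨s, hy5, hw5⟩
        · exact hu1 ⟨x₀, a, y, s, by rw [hu4, ht5], hy⟩
        · refine h1 ⟨s, linv a, z, hw5, ?_, ?_⟩
          · intro b hb
            exact hy b (by rw [hy5]; simp [hb])
          · have : a ∈ u := by rw [hu4]; simp
            exact hu3 a this
      · exact hw ⟨t, a, y, z, hw4, hy⟩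
    have hrwv : Red Γ (w ++ v) := by
      rintro ⟨x₀, a, y, z, heq, hy⟩
      rcases locate2 (heq : w ++ v = x₀ ++ a :: (y ++ linv a :: z)) with
        ⟨t, hw4, hY⟩ | ⟨t, hx4, hv4⟩
      · rcases locate2 (hY.symm : t ++ v = y ++ linv a :: z) with
          ⟨s, ht5, hz5⟩ | ⟨s, hy5, hv5⟩
        · exact hw ⟨x₀, a, y, s, by rw [hw4, ht5], hy⟩
        · refine h2 ⟨x₀, a, t, hw4, ?_, ?_⟩
          · intro b hb
            exact hy b (by rw [hy5]; simp [hb])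
          · have : linv a ∈ v := by rw [hv5]; simp
            have := hv3 (linv a) this
            simpa using this
      · exact hv1 ⟨t, a, y, z, hv4, hy⟩
    have hse : SE Γ (u ++ w) (w ++ v) := red_unique hR hruw hrwv heval
    obtain ⟨p, q, r, z, e1, e2, e3, e4, hadj⟩ :=
      levi u.length u w w v le_rfl hruw hrwv hse
    -- first, z = []
    have hz : z = [] := by
      rcases List.eq_nil_or_concat z with hz | ⟨z₁, e, hz⟩
      · exact hz
      · exfalso
        subst hz
        have : SE Γ ((r ++ z₁) ++ [e]) w := by
          refine SE.trans ?_ e2.symm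
          simp only [List.concat_eq_append, List.append_assoc]
          rfl
        obtain ⟨π, κ, hw5, hκ, -⟩ := se_concat_split this
        refine h2 ⟨π, e, κ, hw5, hκ, ?_⟩
        have he : e ∈ v := by
          rw [e4.mem_iff]
          simp
        exact hv3 e he
    subst hz
    -- next, p = []
    have hp : p = [] := by
      have l1 : u.length = v.length := by
        have := hse.length_eq
        simp only [List.length_append] at this
        omega
      have l2 : u.length = p.length + q.length := by
        have := e1.length_eq; simpa using this
      have l3 : v.length = q.length := by
        have := e4.length_eq; simpa using this
      have : p.length = 0 := by omega
      exact List.eq_nil_of_length_eq_zero this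
    subst hp
    simp only [List.nil_append, List.append_nil] at e1 e2 e3 e4
    -- now u ~ q, w ~ r, v ~ q
    have hx : x = eval Γ q := by rw [← hu2]; exact eval_se hR e1
    rw [hx]
    apply eval_mem_std
    intro c hc
    refine ⟨hu3 c (by rw [e1.mem_iff]; exact hc), hv3 c (by rw [e4.mem_iff]; exact hc), ?_⟩
    intro d hd
    exact hadj c hc d (e2.mem_iff.mp hd)
  · -- easy direction
    apply le_inf
    · apply Subgroup.closure_mono
      apply Set.image_mono
      intro v hv
      exact hv.1
    · intro x hx
      rw [mem_conjP]
      have hxB : x ∈ Γ.std B := by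
        refine Subgroup.closure_mono (Set.image_mono ?_) hx
        intro v hv
        exact hv.2.1
      have hcomm : Commute x (eval Γ w) := by
        have : Γ.std D ≤ Subgroup.centralizer {eval Γ w} := by
          rw [std, Subgroup.closure_le]
          rintro y ⟨v, hv, rfl⟩
          rw [SetLike.mem_coe, Subgroup.mem_centralizer_iff]
          rintro g ⟨rfl⟩
          exact (commute_gen_eval hR hv.2.2).symm.eq
        have := this hx
        rw [Subgroup.mem_centralizer_iff] at this
        exact (this (eval Γ w) rfl).symm
      have : (eval Γ w)⁻¹ * x * eval Γ w = x := by
        rw [mul_assoc, hcomm.eq, ← mul_assoc]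
        group
      rw [this]
      exact hxB

end Raag

-- Part 9: the main induction and the theorem
namespace Raag
open ArtinGraph

variable {V : Type} {Γ : ArtinGraph V}

lemma conjP_of_mem {G : Type*} [Group G] {H : Subgroup G} {e : G} (he : e ∈ H) :
    ArtinGraph.conjP e H = H := by
  ext x
  rw [mem_conjP]
  constructor
  · intro hx
    have := Subgroup.mul_mem _ (Subgroup.mul_mem _ he hx) (Subgroup.inv_mem _ he)
    convert this using 1
    group
  · intro hx
    exact Subgroup.mul_mem _ (Subgroup.mul_mem _ (Subgroup.inv_mem _ he) hx) he

lemma key (hR : ∀ u v, Γ.m u v = 0 ∨ Γ.m u v = 2) :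
    ∀ (n : ℕ) (w : List (V × Bool)), Red Γ w → w.length ≤ n →
    ∀ A B : Set V,
      Γ.IsParabolic (Γ.std A ⊓ ArtinGraph.conjP (eval Γ w) (Γ.std B)) := by
  intro n
  induction n with
  | zero =>
      intro w hw hl A B
      have hnil : w = [] := List.eq_nil_of_length_eq_zero (Nat.le_zero.mp hl)
      subst hnil
      rw [case3 hR hw (by rintro ⟨p, c, q, heq, -, -⟩; simp at heq)
        (by rintro ⟨p, c, q, heq, -, -⟩; simp at heq)]
      exact ⟨_, 1, (conjP_one _).symm⟩
  | succ n ih =>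
      intro w hw hl A B
      by_cases hc1 : ∃ p c q, w = p ++ c :: q ∧ (∀ b ∈ p, Γ.m c.1 b.1 ≠ 0) ∧ c.1 ∈ A
      · obtain ⟨p, c, q, rfl, hp, hcA⟩ := hc1
        have hred : Red Γ (p ++ q) := red_removeFront hw hp
        have hlen : (p ++ q).length ≤ n := by
          simp only [List.length_append, List.length_cons] at hl ⊢
          omega
        have hev : eval Γ (p ++ c :: q) = evalL Γ c * eval Γ (p ++ q) := by
          rw [eval_se hR (se_moveFront c q hp)]
          simp
        have hP := ih (p ++ q) hred hlen A B
        have hE : Γ.std A ⊓ ArtinGraph.conjP (eval Γ (p ++ c :: q)) (Γ.std B) =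
            ArtinGraph.conjP (evalL Γ c)
              (Γ.std A ⊓ ArtinGraph.conjP (eval Γ (p ++ q)) (Γ.std B)) := by
          rw [conjP_inf, conjP_of_mem (evalL_mem_std hcA), conjP_conjP, ← hev]
        rw [hE]
        exact isParabolic_conjP _ hP
      by_cases hc2 : ∃ p c q, w = p ++ c :: q ∧ (∀ b ∈ q, Γ.m c.1 b.1 ≠ 0) ∧ c.1 ∈ B
      · obtain ⟨p, c, q, rfl, hq, hcB⟩ := hc2
        have hred : Red Γ (p ++ q) := red_removeBack hw hq
        have hlen : (p ++ q).length ≤ n := by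
          simp only [List.length_append, List.length_cons] at hl ⊢
          omega
        have hev : eval Γ (p ++ c :: q) = eval Γ (p ++ q) * evalL Γ c := by
          rw [eval_se hR (se_moveBack c p hq)]
          simp [mul_assoc]
        have hE : ArtinGraph.conjP (eval Γ (p ++ c :: q)) (Γ.std B) =
            ArtinGraph.conjP (eval Γ (p ++ q)) (Γ.std B) := by
          rw [hev, ← conjP_conjP, conjP_of_mem (evalL_mem_std hcB)]
        rw [hE]
        exact ih (p ++ q) hred hlen A B
      · rw [case3 hR hw hc1 hc2]
        exact ⟨_, 1, (conjP_one _).symm⟩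

end Raag


open ArtinGraph in
/-- in a right-angled Artin group (all labels equal to `2`), the
intersection of any two parabolic subgroups is a parabolic subgroup. -/
theorem stmt18 {V : Type} [Finite V] (Γ : ArtinGraph V)
    (hRAAG : ∀ u v, Γ.m u v = 0 ∨ Γ.m u v = 2)
    (P Q : Subgroup Γ.ArtinGroup) (hP : Γ.IsParabolic P) (hQ : Γ.IsParabolic Q) :
    Γ.IsParabolic (P ⊓ Q) := by
  classical
  obtain ⟨S, g, rfl⟩ := hP
  obtain ⟨T, h, rfl⟩ := hQ
  have hsplit : conjP g (Γ.std S) ⊓ conjP h (Γ.std T) =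
      conjP g (Γ.std S ⊓ conjP (g⁻¹ * h) (Γ.std T)) := by
    rw [Raag.conjP_inf, Raag.conjP_conjP, show g * (g⁻¹ * h) = h from by group]
  obtain ⟨w, hw1, hw2⟩ := Raag.exists_red hRAAG (g⁻¹ * h)
  rw [hsplit, ← hw2]
  exact Raag.isParabolic_conjP g (Raag.key hRAAG w.length w hw1 le_rfl S T)
end

section
/- Let Γ be an even Artin graph, A ⊆ V, and let P be a subgroup of G_Γ contained in G_A and contained in some conjugate hG_Bh^{-1} with B ⊆ V, h ∈ G_Γ. Then P is contained in aG_{A∩B}a^{-1} for some a ∈ G_A; in particular P ⊆ ρ_A(h)·G_{A∩B}·ρ_A(h)^{-1}. -/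
section Aux
open ArtinGraph
open scoped Classical

variable {V : Type} {G : Type*} [Group G]

/-- abstract alternating word -/
private def aword : G → G → ℕ → G
  | _, _, 0 => 1
  | a, b, n+1 => a * aword b a n

private lemma hom_word (φ : FreeGroup V →* G) (u v : V) (n : ℕ) :
    φ (word u v n) = aword (φ (FreeGroup.of u)) (φ (FreeGroup.of v)) n := by
  induction n generalizing u v with
  | zero => simp [word, aword]
  | succ n ih => simp [word, aword, ih, map_mul]

private lemma aword_one (a : G) : ∀ n, aword a 1 n = a ^ ((n+1)/2) ∧ aword (1:G) a n = a ^ (n/2) := by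
  intro n
  induction n generalizing a with
  | zero => simp [aword]
  | succ n ih =>
    constructor
    · show a * aword 1 a n = _
      rw [(ih a).2, show (n+1+1)/2 = n/2 + 1 by omega, pow_succ']
    · show (1:G) * aword a 1 n = _
      rw [one_mul, (ih a).1]

variable (Γ : ArtinGraph V)

/-- the generator-killing map -/
private noncomputable def killFun (A : Set V) : V → Γ.ArtinGroup :=
  fun v => if v ∈ A then Γ.gen v else 1

private lemma kill_rels (hEven : Γ.IsEven) (A : Set V) :
    ∀ r ∈ Γ.rels, FreeGroup.lift (killFun Γ A) r = 1 := by
  rintro r ⟨u, v, hm, rfl⟩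
  set m := Γ.m u v with hmdef
  obtain ⟨k, hk⟩ := hEven u v
  have hk2 : m = 2 * k := by omega
  have key : ∀ x y : V, FreeGroup.lift (killFun Γ A) (word x y m) =
      if x ∈ A ∧ y ∈ A then id (α := Γ.ArtinGroup) ((PresentedGroup.mk Γ.rels) (word x y m))
      else aword (killFun Γ A x) (killFun Γ A y) m := by
    intro x y
    rw [hom_word]
    split
    · next hxy =>
      rw [hom_word]
      simp only [FreeGroup.lift_apply_of, killFun, if_pos hxy.1, if_pos hxy.2]
      rfl
    · simp only [FreeGroup.lift_apply_of]
  by_cases hu : u ∈ A <;> by_cases hv : v ∈ A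
  · have hmem : (word u v m * (word v u m)⁻¹) ∈ Subgroup.normalClosure Γ.rels :=
      Subgroup.subset_normalClosure ⟨u, v, hm, rfl⟩
    have h1 : (PresentedGroup.mk Γ.rels) (word u v m * (word v u m)⁻¹) = 1 :=
      (QuotientGroup.eq_one_iff _).mpr hmem
    rw [map_mul, map_inv] at h1
    rw [map_mul, map_inv, key, key]
    simp only [hu, hv, and_self, if_true]; exact h1
  · rw [map_mul, map_inv, key, key]
    simp only [hu, hv, and_true, and_false, if_false]
    have h1 : killFun Γ A u = Γ.gen u := if_pos hu
    have h2 : killFun Γ A v = 1 := if_neg hv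
    rw [h1, h2, (aword_one (Γ.gen u) m).1, (aword_one (Γ.gen u) m).2,
      show (m+1)/2 = m/2 by omega, mul_inv_cancel]
  · rw [map_mul, map_inv, key, key]
    simp only [hu, hv, false_and, and_false, if_false]
    have h1 : killFun Γ A u = 1 := if_neg hu
    have h2 : killFun Γ A v = Γ.gen v := if_pos hv
    rw [h1, h2, (aword_one (Γ.gen v) m).2, (aword_one (Γ.gen v) m).1,
      show (m+1)/2 = m/2 by omega, mul_inv_cancel]
  · rw [map_mul, map_inv, key, key]
    simp only [hu, hv, false_and, if_false]
    have h1 : killFun Γ A u = 1 := if_neg hu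
    have h2 : killFun Γ A v = 1 := if_neg hv
    rw [h1, h2, (aword_one (1:Γ.ArtinGroup) m).2, one_pow, mul_inv_cancel]

/-- the retraction -/
private noncomputable def retr (hEven : Γ.IsEven) (A : Set V) : Γ.ArtinGroup →* Γ.ArtinGroup :=
  PresentedGroup.toGroup (kill_rels Γ hEven A)

private lemma retr_gen (hEven : Γ.IsEven) (A : Set V) (v : V) :
    retr Γ hEven A (Γ.gen v) = if v ∈ A then Γ.gen v else 1 :=
  PresentedGroup.toGroup.of _

private lemma retr_mem (hEven : Γ.IsEven) (A : Set V) (g : Γ.ArtinGroup) :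
    retr Γ hEven A g ∈ Γ.std A := by
  have : (Subgroup.closure (Set.range (PresentedGroup.of : V → Γ.ArtinGroup)) : Subgroup Γ.ArtinGroup) = ⊤ :=
    PresentedGroup.closure_range_of Γ.rels
  have hg : g ∈ (Subgroup.closure (Set.range (PresentedGroup.of : V → Γ.ArtinGroup)) : Subgroup Γ.ArtinGroup) := by
    rw [this]; trivial
  refine Subgroup.closure_induction ?_ ?_ ?_ ?_ hg
  · rintro x ⟨v, rfl⟩
    rw [show (PresentedGroup.of v : Γ.ArtinGroup) = Γ.gen v from rfl, retr_gen]
    split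
    · next hv => exact Subgroup.subset_closure ⟨v, hv, rfl⟩
    · exact one_mem _
  · simp only [map_one]; exact one_mem _
  · intro x y _ _ hx hy; rw [map_mul]; exact mul_mem hx hy
  · intro x _ hx; rw [map_inv]; exact inv_mem hx

end Aux

open ArtinGraph in
/-- in an even Artin group, if `P ≤ G_A` and `P ≤ hG_Bh⁻¹`, then
`P ≤ aG_{A∩B}a⁻¹` for some `a ∈ G_A`; in particular, for the canonical
retraction `ρ_A` one has `P ≤ ρ_A(h)·G_{A∩B}·ρ_A(h)⁻¹`. -/
theorem stmt19 {V : Type} (Γ : ArtinGraph V) (hEven : Γ.IsEven) (A B : Set V)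
    (P : Subgroup Γ.ArtinGroup) (h : Γ.ArtinGroup)
    (hPA : P ≤ Γ.std A) (hPB : P ≤ conjP h (Γ.std B)) :
    (∃ a ∈ Γ.std A, P ≤ conjP a (Γ.std (A ∩ B))) ∧
      ∀ ρA : Γ.ArtinGroup →* Γ.ArtinGroup,
        (∀ g, ρA g ∈ Γ.std A) → (∀ s ∈ A, ρA (Γ.gen s) = Γ.gen s) →
        (∀ v ∉ A, ρA (Γ.gen v) = 1) →
        P ≤ conjP (ρA h) (Γ.std (A ∩ B)) := by
  have main : ∀ ρA : Γ.ArtinGroup →* Γ.ArtinGroup,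
      (∀ g, ρA g ∈ Γ.std A) → (∀ s ∈ A, ρA (Γ.gen s) = Γ.gen s) →
      (∀ v ∉ A, ρA (Γ.gen v) = 1) →
      P ≤ conjP (ρA h) (Γ.std (A ∩ B)) := by
    intro ρA _hrange hfix hkill
    have hfixA : ∀ x ∈ Γ.std A, ρA x = x := by
      intro x hx
      refine Subgroup.closure_induction ?_ ?_ ?_ ?_ hx
      · rintro y ⟨s, hs, rfl⟩; exact hfix s hs
      · exact map_one ρA
      · intro a b _ _ ha hb; rw [map_mul, ha, hb]
      · intro a _ ha; rw [map_inv, ha]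
    have hB : ∀ q ∈ Γ.std B, ρA q ∈ Γ.std (A ∩ B) := by
      intro q hq
      refine Subgroup.closure_induction ?_ ?_ ?_ ?_ hq
      · rintro y ⟨s, hs, rfl⟩
        by_cases hsA : s ∈ A
        · rw [hfix s hsA]
          exact Subgroup.subset_closure ⟨s, ⟨hsA, hs⟩, rfl⟩
        · rw [hkill s hsA]; exact one_mem _
      · rw [map_one]; exact one_mem _
      · intro a b _ _ ha hb; rw [map_mul]; exact mul_mem ha hb
      · intro a _ ha; rw [map_inv]; exact inv_mem ha
    intro p hp
    obtain ⟨q, hq, hqe⟩ := hPB hp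
    have hqe' : h * q * h⁻¹ = p := hqe
    have hpe : p = ρA h * ρA q * (ρA h)⁻¹ := by
      rw [← hfixA p (hPA hp), ← hqe']
      simp [map_mul, map_inv]
    exact ⟨ρA q, hB q hq, hpe.symm⟩
  refine ⟨?_, main⟩
  exact ⟨retr Γ hEven A h, retr_mem Γ hEven A h,
    main (retr Γ hEven A) (retr_mem Γ hEven A)
      (fun s hs => by rw [retr_gen, if_pos hs])
      (fun v hv => by rw [retr_gen, if_neg hv])⟩
end
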